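/- Let N be a trie over an alphabet α: a finite set of finite lists over α that is closed under taking prefixes and contains the empty list (the root). For a node p ∈ N, the children of p are the nodes q ∈ N with q ≠ [] whose list with its last element removed equals p. Then for every node c ∈ N, the parsing search steps for c — the sum, over all prefixes p of c, of the number of children of p in N — is at most |N| − 1 (the number of non-root nodes of the trie). In particular, identifying a chunk by traversing the tree-structured memory takes no more search steps than the total number of stored chunks. -/
import Mathlib


/-- In a trie (a finite, prefix-closed set of lists containing the root `[]`),
the parsing search steps for a node `c` — the sum over all prefixes `p` of `c`
of the number of children of `p` — is at most the number of non-root nodes. -/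
theorem parsing_search_steps_le_card_sub_one
    {α : Type*} [DecidableEq α] (N : Finset (List α))
    (hroot : ([] : List α) ∈ N)
    (hclosed : ∀ p ∈ N, ∀ q : List α, q <+: p → q ∈ N)
    (c : List α) (hc : c ∈ N) :
    ∑ p ∈ c.inits.toFinset,
        (N.filter (fun q => q ≠ [] ∧ q.dropLast = p)).card ≤ N.card - 1 := by
  classical
  have hdisj : ∀ p ∈ c.inits.toFinset, ∀ q ∈ c.inits.toFinset, p ≠ q →
      Disjoint (N.filter (fun r => r ≠ [] ∧ r.dropLast = p))
               (N.filter (fun r => r ≠ [] ∧ r.dropLast = q)) := by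
    intro p _ q _ hpq
    simp only [Finset.disjoint_left, Finset.mem_filter]
    rintro r ⟨_, _, rfl⟩ ⟨_, _, h⟩
    exact hpq h
  rw [← Finset.card_biUnion hdisj]
  have hsub : (c.inits.toFinset.biUnion
      fun p => N.filter (fun r => r ≠ [] ∧ r.dropLast = p)) ⊆ N.erase [] := by
    intro r hr
    simp only [Finset.mem_biUnion, Finset.mem_filter] at hr
    obtain ⟨p, _, hrN, hne, _⟩ := hr
    exact Finset.mem_erase.mpr ⟨hne, hrN⟩
  calc _ ≤ (N.erase []).card := Finset.card_le_card hsub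
    _ = N.card - 1 := Finset.card_erase_of_mem hroot
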